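/- For 0 < a ≤ 1 and a constant C_a > 0, define l_a(z) = C_a·(log(e^{z−1} + 1) + log(e^{1−z} + 1))^a. Then l_a is product-stable at its minimum z = 1: α_{l_a}(1) = 3(l_a'''(1))² − l_a''''(1)·l_a''(1) > 0. -/

import Mathlib

noncomputable def Gf : ℝ → ℝ := fun z =>
  Real.log (Real.exp (z - 1) + 1) + Real.log (Real.exp (1 - z) + 1)

noncomputable def Wf : ℝ → ℝ := fun z =>
  2 * (Real.exp (z - 1) / (Real.exp (z - 1) + 1)) - 1

lemma Gf_pos (z : ℝ) : 0 < Gf z := by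
  have h1 : 0 < Real.log (Real.exp (z - 1) + 1) :=
    Real.log_pos (by linarith [Real.exp_pos (z - 1)])
  have h2 : 0 < Real.log (Real.exp (1 - z) + 1) :=
    Real.log_pos (by linarith [Real.exp_pos (1 - z)])
  have : Gf z = Real.log (Real.exp (z - 1) + 1) + Real.log (Real.exp (1 - z) + 1) := rfl
  linarith

lemma Wf_one : Wf 1 = 0 := by
  simp [Wf]
  norm_num

lemma exp_add_one_ne (t : ℝ) : Real.exp t + 1 ≠ 0 := by
  positivity

lemma hasDerivAt_Wf (z : ℝ) : HasDerivAt Wf ((1 - Wf z ^ 2) / 2) z := by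
  have hu : HasDerivAt (fun z : ℝ => Real.exp (z - 1)) (Real.exp (z - 1)) z := by
    simpa using ((hasDerivAt_id z).sub_const 1).exp
  have hden : HasDerivAt (fun z : ℝ => Real.exp (z - 1) + 1) (Real.exp (z - 1)) z :=
    hu.add_const 1
  have hq := hu.div hden (exp_add_one_ne (z - 1))
  have h := (hq.const_mul 2).sub_const 1
  convert h using 1
  · rfl
  · rfl
  · rfl
  have hne := exp_add_one_ne (z - 1)
  show (1 - Wf z ^ 2) / 2 = _
  simp only [Wf]
  field_simp
  ring

lemma hasDerivAt_Gf (z : ℝ) : HasDerivAt Gf (Wf z) z := by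
  have hu : HasDerivAt (fun z : ℝ => Real.exp (z - 1)) (Real.exp (z - 1)) z := by
    simpa using ((hasDerivAt_id z).sub_const 1).exp
  have hv : HasDerivAt (fun z : ℝ => Real.exp (1 - z)) (-Real.exp (1 - z)) z := by
    simpa using ((hasDerivAt_id z).const_sub 1).exp
  have h1 := ((hu.add_const 1).log (exp_add_one_ne (z - 1)))
  have h2 := ((hv.add_const 1).log (exp_add_one_ne (1 - z)))
  have h := h1.add h2
  convert h using 1
  · rfl
  · rfl
  · rfl
  have hvv : Real.exp (1 - z) = (Real.exp (z - 1))⁻¹ := by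
    rw [← Real.exp_neg]; ring_nf
  have hne := exp_add_one_ne (z - 1)
  have hne' := exp_add_one_ne (1 - z)
  show Wf z = _
  simp only [Wf]
  rw [hvv] at hne' ⊢
  have hu0 : Real.exp (z - 1) ≠ 0 := (Real.exp_pos _).ne'
  field_simp
  ring

lemma hasDerivAt_Gpow (p : ℝ) (z : ℝ) :
    HasDerivAt (fun z => Gf z ^ p) (p * Gf z ^ (p - 1) * Wf z) z := by
  have := (hasDerivAt_Gf z).rpow_const (p := p) (Or.inl (Gf_pos z).ne')
  convert this using 1
  ring

/-- The loss `l_a(z) = C_a (log(e^{z−1} + 1) + log(e^{1−z} + 1))^a`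
of Wang et al. with degree of regularity `a ∈ (0,1]` is product-stable at its
minimum `z = 1`. -/
theorem degree_of_regularity_loss_product_stable
    (a : ℝ) (ha0 : 0 < a) (ha1 : a ≤ 1) (C : ℝ) (hC : 0 < C)
    (l : ℝ → ℝ)
    (hl : ∀ z : ℝ,
      l z = C * (Real.log (Real.exp (z - 1) + 1) + Real.log (Real.exp (1 - z) + 1)) ^ a) :
    0 < 3 * (iteratedDeriv 3 l 1) ^ 2 - iteratedDeriv 4 l 1 * iteratedDeriv 2 l 1 := by
  have hlG : l = fun z => C * Gf z ^ a := funext fun z => by rw [hl]; rfl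
  -- first derivative
  have h1 : ∀ z, HasDerivAt l (C * a * (Gf z ^ (a - 1) * Wf z)) z := by
    intro z
    rw [hlG]
    have := (hasDerivAt_Gpow a z).const_mul C
    convert this using 1
    · rfl
    · rfl
    ring
  have e1 : deriv l = fun z => C * a * (Gf z ^ (a - 1) * Wf z) :=
    funext fun z => (h1 z).deriv
  -- second derivative
  have h2 : ∀ z, HasDerivAt (fun z => C * a * (Gf z ^ (a - 1) * Wf z))
      (C * a * ((a - 1) * Gf z ^ (a - 2) * Wf z ^ 2
        + Gf z ^ (a - 1) * ((1 - Wf z ^ 2) / 2))) z := by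
    intro z
    have := ((hasDerivAt_Gpow (a - 1) z).mul (hasDerivAt_Wf z)).const_mul (C * a)
    convert this using 1
    · rfl
    · rfl
    · rfl
    have exp1 : a - 1 - 1 = a - 2 := by ring
    rw [exp1]
    ring
  have e2 : deriv (fun z => C * a * (Gf z ^ (a - 1) * Wf z))
      = fun z => C * a * ((a - 1) * Gf z ^ (a - 2) * Wf z ^ 2
        + Gf z ^ (a - 1) * ((1 - Wf z ^ 2) / 2)) :=
    funext fun z => (h2 z).deriv
  -- third derivative
  have h3 : ∀ z, HasDerivAt (fun z => C * a * ((a - 1) * Gf z ^ (a - 2) * Wf z ^ 2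
      + Gf z ^ (a - 1) * ((1 - Wf z ^ 2) / 2)))
      (C * a * ((a - 1) * (a - 2) * Gf z ^ (a - 3) * Wf z ^ 3
        + 3 * (a - 1) * Gf z ^ (a - 2) * (Wf z * ((1 - Wf z ^ 2) / 2))
        - Gf z ^ (a - 1) * (Wf z * ((1 - Wf z ^ 2) / 2)))) z := by
    intro z
    have hA := (((hasDerivAt_Gpow (a - 2) z).mul ((hasDerivAt_Wf z).pow 2)).const_mul (a - 1))
    have hB := (hasDerivAt_Gpow (a - 1) z).mul
      ((((hasDerivAt_Wf z).pow 2).const_sub 1).div_const 2)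
    have := (hA.add hB).const_mul (C * a)
    convert this using 1
    · rfl
    · rfl
    · funext y; simp only [Pi.add_apply, Pi.sub_apply, Pi.mul_apply, Pi.pow_apply]; ring
    · have exp1 : a - 2 - 1 = a - 3 := by ring
      have exp2 : a - 1 - 1 = a - 2 := by ring
      rw [exp1, exp2]
      simp only [Pi.pow_apply]
      push_cast
      ring
  have e3 : deriv (fun z => C * a * ((a - 1) * Gf z ^ (a - 2) * Wf z ^ 2
      + Gf z ^ (a - 1) * ((1 - Wf z ^ 2) / 2)))
      = fun z => C * a * ((a - 1) * (a - 2) * Gf z ^ (a - 3) * Wf z ^ 3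
        + 3 * (a - 1) * Gf z ^ (a - 2) * (Wf z * ((1 - Wf z ^ 2) / 2))
        - Gf z ^ (a - 1) * (Wf z * ((1 - Wf z ^ 2) / 2))) :=
    funext fun z => (h3 z).deriv
  -- fourth derivative at 1
  have h4 : HasDerivAt (fun z => C * a * ((a - 1) * (a - 2) * Gf z ^ (a - 3) * Wf z ^ 3
      + 3 * (a - 1) * Gf z ^ (a - 2) * (Wf z * ((1 - Wf z ^ 2) / 2))
      - Gf z ^ (a - 1) * (Wf z * ((1 - Wf z ^ 2) / 2))))
      (C * a * (3 * (a - 1) * Gf 1 ^ (a - 2) / 4 - Gf 1 ^ (a - 1) / 4)) 1 := by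
    have hInner :=
      (hasDerivAt_Wf 1).mul ((((hasDerivAt_Wf 1).pow 2).const_sub 1).div_const 2)
    have hT1 := (((hasDerivAt_Gpow (a - 3) 1).mul ((hasDerivAt_Wf 1).pow 3)).const_mul
      ((a - 1) * (a - 2)))
    have hT2 := (((hasDerivAt_Gpow (a - 2) 1).mul hInner).const_mul (3 * (a - 1)))
    have hT3 := (hasDerivAt_Gpow (a - 1) 1).mul hInner
    have := ((hT1.add hT2).sub hT3).const_mul (C * a)
    convert this using 1
    · rfl
    · rfl
    · funext y; simp only [Pi.add_apply, Pi.sub_apply, Pi.mul_apply, Pi.pow_apply]; ring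
    · simp only [Pi.mul_apply, Pi.pow_apply]
      rw [Wf_one]
      push_cast
      ring
  have m1 : iteratedDeriv 2 l 1 = C * a * (Gf 1 ^ (a - 1) / 2) := by
    rw [iteratedDeriv_eq_iterate]
    show deriv (deriv l) 1 = _
    rw [e1, (h2 1).deriv, Wf_one]
    ring
  have m2 : iteratedDeriv 3 l 1 = 0 := by
    rw [iteratedDeriv_eq_iterate]
    show deriv (deriv (deriv l)) 1 = _
    rw [e1, e2, (h3 1).deriv, Wf_one]
    ring
  have m3 : iteratedDeriv 4 l 1
      = C * a * (3 * (a - 1) * Gf 1 ^ (a - 2) / 4 - Gf 1 ^ (a - 1) / 4) := by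
    rw [iteratedDeriv_eq_iterate]
    show deriv (deriv (deriv (deriv l))) 1 = _
    rw [e1, e2, e3]
    exact h4.deriv
  rw [m1, m2, m3]
  have hm : 0 < Gf 1 := Gf_pos 1
  have hp1 : 0 < Gf 1 ^ (a - 1) := Real.rpow_pos_of_pos hm _
  have hp2 : 0 < Gf 1 ^ (a - 2) := Real.rpow_pos_of_pos hm _
  have hCa : 0 < C * a := mul_pos hC ha0
  have key : 0 ≤ (1 - a) * Gf 1 ^ (a - 2) := by nlinarith
  nlinarith [mul_pos (mul_pos hCa hCa) (mul_pos hp1 hp1),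
    mul_nonneg (mul_nonneg (mul_pos hCa hCa).le key) hp1.le]
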